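/- Let ε̂(n) = 1 - b·e^{-a·w(n)} - c with a, b > 0 and w(n) = √(n/V)·(C - d/n)·ln 2 for d, V, C > 0. Then ε̂ is concave on (0,∞): ε̂''(n) = (∂²ε̂/∂w²)(w'(n))² + (∂ε̂/∂w)·w''(n) ≤ 0, since ∂²ε̂/∂w² = -a²b e^{-aw} < 0, ∂ε̂/∂w = ab e^{-aw} > 0, and w''(n) ≤ 0. -/

import Mathlib

open Real Set

noncomputable def wfun (d V C n : ℝ) : ℝ := Real.sqrt (n / V) * (C - d / n) * Real.log 2

lemma sqrt_concave : ConcaveOn ℝ (Set.Ioi (0:ℝ)) Real.sqrt :=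
  Real.strictConcaveOn_sqrt.concaveOn.subset (fun x hx => Set.mem_Ici.2 (le_of_lt hx)) (convex_Ioi 0)

lemma sqrt_image_Ioi : Real.sqrt '' Set.Ioi (0:ℝ) = Set.Ioi (0:ℝ) := by
  apply Set.Subset.antisymm
  · rintro y ⟨x, hx, rfl⟩
    exact Real.sqrt_pos.2 hx
  · intro y hy
    exact ⟨y ^ 2, Set.mem_Ioi.2 (pow_pos hy 2), Real.sqrt_sq (le_of_lt hy)⟩

lemma inv_convex : ConvexOn ℝ (Set.Ioi (0:ℝ)) (fun x : ℝ => x⁻¹) :=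
  ((strictConvexOn_zpow (m := -1) (by decide) (by decide)).convexOn).congr
    (fun x _ => by simp [zpow_neg_one])

lemma inv_sqrt_convex : ConvexOn ℝ (Set.Ioi (0:ℝ)) (fun n : ℝ => (Real.sqrt n)⁻¹) := by
  have h := ConvexOn.comp_concaveOn (f := Real.sqrt) (g := fun x : ℝ => x⁻¹)
    (s := Set.Ioi (0:ℝ)) (by rw [sqrt_image_Ioi]; exact inv_convex)
    sqrt_concave ?_
  · exact h
  · rw [sqrt_image_Ioi]
    intro x hx y hy hxy
    exact inv_anti₀ hx hxy

lemma wfun_concave (d V C : ℝ) (hd : 0 < d) (hV : 0 < V) (hC : 0 < C) :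
    ConcaveOn ℝ (Set.Ioi (0:ℝ)) (wfun d V C) := by
  have hV' : (0:ℝ) < Real.sqrt V := Real.sqrt_pos.2 hV
  have hlog : (0:ℝ) < Real.log 2 := Real.log_pos (by norm_num)
  have h1 : ConcaveOn ℝ (Set.Ioi (0:ℝ))
      (fun n : ℝ => (C * Real.log 2 / Real.sqrt V) • Real.sqrt n +
        (d * Real.log 2 / Real.sqrt V) • (-(Real.sqrt n)⁻¹)) := by
    have k1 : (0:ℝ) ≤ C * Real.log 2 / Real.sqrt V := by positivity
    have k2 : (0:ℝ) ≤ d * Real.log 2 / Real.sqrt V := by positivity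
    exact ConcaveOn.add (sqrt_concave.smul k1) (ConvexOn.neg inv_sqrt_convex |>.smul k2)
  refine h1.congr ?_
  intro n hn
  obtain ⟨s, hs, rfl⟩ : ∃ s : ℝ, 0 < s ∧ s * s = n :=
    ⟨Real.sqrt n, Real.sqrt_pos.2 hn, Real.mul_self_sqrt (le_of_lt hn)⟩
  simp only [wfun, smul_eq_mul]
  rw [Real.sqrt_div (by positivity), Real.sqrt_mul_self hs.le]
  field_simp
  ring

theorem eps_hat_concave (a b c d V C : ℝ) (ha : 0 < a) (hb : 0 < b)
    (hd : 0 < d) (hV : 0 < V) (hC : 0 < C) :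
    ConcaveOn ℝ (Set.Ioi (0 : ℝ))
      (fun n : ℝ => 1 - b * Real.exp (-(a * wfun d V C n)) - c) := by
  set g : ℝ → ℝ := fun x => 1 - b * Real.exp (-(a * x)) - c with hg
  have hexp : ConvexOn ℝ (Set.univ : Set ℝ) (fun x : ℝ => Real.exp (-(a * x))) := by
    have := convexOn_exp.comp_linearMap (LinearMap.lsmul ℝ ℝ (-a))
    refine this.subset (Set.subset_univ _) convex_univ |>.congr ?_
    intro x _
    simp [LinearMap.lsmul_apply, smul_eq_mul, Function.comp]
  have gconc : ConcaveOn ℝ (Set.univ : Set ℝ) g := by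
    have h1 : ConcaveOn ℝ (Set.univ : Set ℝ)
        (fun x : ℝ => b • (-Real.exp (-(a * x))) + (1 - c)) :=
      ConcaveOn.add (ConvexOn.neg hexp |>.smul hb.le) (concaveOn_const _ convex_univ)
    refine h1.congr ?_
    intro x _
    simp [hg, smul_eq_mul]
    ring
  have gmono : Monotone g := by
    intro x y hxy
    have he : Real.exp (-(a * y)) ≤ Real.exp (-(a * x)) :=
      Real.exp_le_exp.2 (by nlinarith)
    have := mul_le_mul_of_nonneg_left he hb.le
    simp only [hg]
    linarith
  have hw := wfun_concave d V C hd hV hC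
  refine ⟨convex_Ioi 0, ?_⟩
  intro x hx y hy α β hα hβ hab
  calc α • g (wfun d V C x) + β • g (wfun d V C y)
      ≤ g (α • wfun d V C x + β • wfun d V C y) :=
        gconc.2 (Set.mem_univ _) (Set.mem_univ _) hα hβ hab
    _ ≤ g (wfun d V C (α • x + β • y)) := gmono (hw.2 hx hy hα hβ hab)
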